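/- Let d ≥ 2, let α̃ be a real number, and let R ∈ ℝ^d. (i) For every λ ∈ (0,1] and every x in the relative interior of the probability simplex Δ^d (i.e. x_k > 0 for all k, Σ_k x_k = 1), setting y := λ·x one has the objective identity ⟨R, y⟩ + α̃·log(Σ_k y_k) − (1/Σ_k y_k)·Σ_k y_k·log y_k = λ·⟨R, x⟩ + (α̃ − 1)·log λ − Σ_k x_k·log x_k. (ii) Consequently, the map (λ, x) ↦ y = λ·x is a bijection between (0,1] × {x ∈ Δ^d : x_k > 0 ∀k} and Ω := {y ∈ ℝ^d : y_k > 0 ∀k, Σ_k y_k ≤ 1}, and a pair (λ*, x*) maximizes (λ, x) ↦ λ⟨R, x⟩ + (α̃−1)log λ − Σ_k x_k log x_k over (0,1] × Δ^d if and only if y* = λ*·x* maximizes y ↦ ⟨R, y⟩ + α̃·log(Σ_k y_k) − (1/Σ_k y_k)Σ_k y_k log y_k over Ω. -/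

import Mathlib

/-- Objective in `(λ, x)`-space:
`λ⟨R,x⟩ + (α̃−1)·log λ − Σ_k x_k log x_k`. -/
noncomputable def objLX {d : ℕ} (αt : ℝ) (R : Fin d → ℝ) (lam : ℝ) (x : Fin d → ℝ) : ℝ :=
  lam * (∑ k, R k * x k) + (αt - 1) * Real.log lam - ∑ k, x k * Real.log (x k)

/-- Objective in lifted `y`-space:
`⟨R,y⟩ + α̃·log(Σ_k y_k) − (1/Σ_k y_k)·Σ_k y_k log y_k`. -/
noncomputable def objY {d : ℕ} (αt : ℝ) (R : Fin d → ℝ) (y : Fin d → ℝ) : ℝ :=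
  (∑ k, R k * y k) + αt * Real.log (∑ k, y k)
    - (1 / ∑ k, y k) * ∑ k, y k * Real.log (y k)

lemma objY_lift {d : ℕ} (αt : ℝ) (R : Fin d → ℝ) {lam : ℝ} (hl : 0 < lam)
    {x : Fin d → ℝ} (hx : ∀ k, 0 < x k) (hs : ∑ k, x k = 1) :
    objY αt R (fun k => lam * x k) = objLX αt R lam x := by
  have hsum : ∑ k, lam * x k = lam := by rw [← Finset.mul_sum, hs, mul_one]
  have hsum2 : ∑ k, (lam * x k) * Real.log (lam * x k)
      = lam * Real.log lam + lam * ∑ k, x k * Real.log (x k) := by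
    have h : ∀ k, (lam * x k) * Real.log (lam * x k)
        = lam * Real.log lam * x k + lam * (x k * Real.log (x k)) := by
      intro k
      rw [Real.log_mul hl.ne' (hx k).ne']
      ring
    simp_rw [h]
    rw [Finset.sum_add_distrib, ← Finset.mul_sum, ← Finset.mul_sum, hs, mul_one]
  have hR : ∑ k, R k * (lam * x k) = lam * ∑ k, R k * x k := by
    rw [Finset.mul_sum]; exact Finset.sum_congr rfl (fun k _ => by ring)
  simp only [objY, objLX, hsum, hsum2, hR]
  field_simp
  ring

/-- equivalence between the DLRC–OFTRL problem in `(λ,x)`-space and the lifted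
optimistic FTRL problem in `y`-space: (i) the objective identity under `y = λ·x`,
(ii) `(λ,x) ↦ λ·x` is a bijection from `(0,1] × riΔ^d` onto `Ω`, and the maximizers
correspond under this map. -/
theorem dlrc_oftrl_equivalence (d : ℕ) (hd : 2 ≤ d) (αt : ℝ) (R : Fin d → ℝ) :
    -- (i) objective identity
    (∀ lam : ℝ, lam ∈ Set.Ioc (0:ℝ) 1 → ∀ x : Fin d → ℝ, (∀ k, 0 < x k) →
      (∑ k, x k) = 1 → objY αt R (fun k => lam * x k) = objLX αt R lam x)
    ∧
    -- (ii) bijection onto the lifted simplex Ω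
    Set.BijOn (fun p : ℝ × (Fin d → ℝ) => fun k => p.1 * p.2 k)
      ((Set.Ioc (0:ℝ) 1) ×ˢ {x : Fin d → ℝ | (∀ k, 0 < x k) ∧ ∑ k, x k = 1})
      {y : Fin d → ℝ | (∀ k, 0 < y k) ∧ ∑ k, y k ≤ 1}
    ∧
    -- (ii) correspondence of maximizers
    (∀ lam : ℝ, ∀ x : Fin d → ℝ, lam ∈ Set.Ioc (0:ℝ) 1 → (∀ k, 0 < x k) →
      (∑ k, x k) = 1 →
      ((∀ lam' ∈ Set.Ioc (0:ℝ) 1, ∀ x' : Fin d → ℝ, (∀ k, 0 ≤ x' k) →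
          (∑ k, x' k) = 1 → objLX αt R lam' x' ≤ objLX αt R lam x)
        ↔
       (∀ y' : Fin d → ℝ, (∀ k, 0 < y' k) → (∑ k, y' k) ≤ 1 →
          objY αt R y' ≤ objY αt R (fun k => lam * x k)))) := by
  have hd0 : 0 < d := lt_of_lt_of_le (by norm_num) hd
  have hdR : (0:ℝ) < d := by exact_mod_cast hd0
  haveI : Nonempty (Fin d) := ⟨⟨0, hd0⟩⟩
  refine ⟨fun lam hl x hx hs => objY_lift αt R hl.1 hx hs, ⟨?_, ?_, ?_⟩, ?_⟩
  · rintro ⟨lam, x⟩ ⟨hl, hx, hs⟩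
    refine ⟨fun k => mul_pos hl.1 (hx k), ?_⟩
    rw [← Finset.mul_sum, hs, mul_one]; exact hl.2
  · rintro ⟨l1, x1⟩ ⟨hl1, hx1, hs1⟩ ⟨l2, x2⟩ ⟨hl2, hx2, hs2⟩ heq
    have hsum : l1 = l2 := by
      have h := congrArg (fun f : Fin d → ℝ => ∑ k, f k) heq
      simpa [← Finset.mul_sum, hs1, hs2] using h
    have hx : x1 = x2 := by
      funext k
      have h := congrFun heq k
      simp only at h
      rw [hsum] at h
      exact mul_left_cancel₀ hl2.1.ne' h
    simp [Prod.ext_iff, hsum, hx]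
  · rintro y ⟨hy, hys⟩
    have hlam : 0 < ∑ k, y k := Finset.sum_pos (fun k _ => hy k) Finset.univ_nonempty
    refine ⟨(∑ k, y k, fun k => y k / ∑ k, y k),
      ⟨⟨hlam, hys⟩, fun k => div_pos (hy k) hlam, ?_⟩, ?_⟩
    · rw [← Finset.sum_div, div_self hlam.ne']
    · funext k
      simp only
      rw [mul_comm, div_mul_cancel₀ _ hlam.ne']
  · intro lam x hl hx hs
    have hId := objY_lift αt R hl.1 hx hs
    constructor
    · intro hmax y' hy' hys'
      have hlam' : 0 < ∑ k, y' k := Finset.sum_pos (fun k _ => hy' k) Finset.univ_nonempty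
      have hx' : ∀ k, 0 < y' k / ∑ j, y' j := fun k => div_pos (hy' k) hlam'
      have hs' : ∑ k, y' k / ∑ j, y' j = 1 := by rw [← Finset.sum_div, div_self hlam'.ne']
      have h1 : objY αt R y' = objLX αt R (∑ j, y' j) (fun k => y' k / ∑ j, y' j) := by
        rw [← objY_lift αt R hlam' hx' hs']
        congr 1
        funext k
        rw [mul_comm, div_mul_cancel₀ _ hlam'.ne']
      calc objY αt R y' = objLX αt R (∑ j, y' j) (fun k => y' k / ∑ j, y' j) := h1
        _ ≤ objLX αt R lam x := hmax _ ⟨hlam', hys'⟩ _ (fun k => (hx' k).le) hs'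
        _ = objY αt R (fun k => lam * x k) := hId.symm
    · intro hmax lam' hl' x' hx' hs'
      have key : ∀ ε ∈ Set.Ioo (0:ℝ) 1,
          objLX αt R lam' (fun k => (1-ε) * x' k + ε / d) ≤ objLX αt R lam x := by
        intro ε hε
        have hpos : ∀ k, 0 < (1-ε) * x' k + ε / d := fun k =>
          add_pos_of_nonneg_of_pos (mul_nonneg (by linarith [hε.2]) (hx' k))
            (div_pos hε.1 hdR)
        have hsum : ∑ k, ((1-ε) * x' k + ε / d) = 1 := by
          rw [Finset.sum_add_distrib, ← Finset.mul_sum, hs', Finset.sum_const,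
            Finset.card_univ, Fintype.card_fin, nsmul_eq_mul]
          field_simp
          ring
        calc objLX αt R lam' (fun k => (1-ε) * x' k + ε / d)
            = objY αt R (fun k => lam' * ((1-ε)*x' k + ε/d)) :=
              (objY_lift αt R hl'.1 hpos hsum).symm
          _ ≤ objY αt R (fun k => lam * x k) := by
              apply hmax _ (fun k => mul_pos hl'.1 (hpos k))
              rw [← Finset.mul_sum, hsum, mul_one]; exact hl'.2
          _ = objLX αt R lam x := hId
      have hvk : ∀ k : Fin d, Continuous (fun ε : ℝ => (1-ε)*x' k + ε/d) := by
        intro k; continuity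
      have hcont : Continuous (fun ε : ℝ => objLX αt R lam' (fun k => (1-ε)*x' k + ε/d)) := by
        unfold objLX
        refine Continuous.sub (Continuous.add ?_ continuous_const) ?_
        · exact continuous_const.mul (continuous_finset_sum _
            (fun k _ => continuous_const.mul (hvk k)))
        · exact continuous_finset_sum _
            (fun k _ => Real.continuous_mul_log.comp (hvk k))
      have h0 : (fun k => (1-(0:ℝ))*x' k + (0:ℝ)/d) = x' := by
        funext k; simp
      have hlim : Filter.Tendsto (fun ε : ℝ => objLX αt R lam' (fun k => (1-ε)*x' k + ε/d))
          (nhdsWithin 0 (Set.Ioi 0)) (nhds (objLX αt R lam' x')) := by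
        have h := (hcont.tendsto 0).mono_left (nhdsWithin_le_nhds (s := Set.Ioi 0))
        simpa [h0] using h
      have hev : ∀ᶠ ε in nhdsWithin (0:ℝ) (Set.Ioi 0),
          objLX αt R lam' (fun k => (1-ε)*x' k + ε/d) ≤ objLX αt R lam x := by
        filter_upwards [Ioo_mem_nhdsGT_of_mem (by norm_num : (0:ℝ) ∈ Set.Ico 0 1)] with ε hε
        exact key ε hε
      exact le_of_tendsto hlim hev
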